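/- Let R be a proper open equivalence relation on a compact Hausdorff space X whose quotient map π is a covering map, p : X → (0,∞) continuous with ∑_{(y,x)∈R} p(y) = 1 (sum over the R-class of x), h : X → (0,∞) continuous, and define E^β(f) = h^β · E(h^{-β} f) where E(f)(x) = ∑_{(y,x)∈R} p(y) f(y). For a Borel probability measure μ on X supported in M_h^R = {x : ∀y, (x,y)∈R → h(x) ≤ h(y)}, one has |∫_X f · E^β(g) dμ| ≤ ‖f‖_∞ ‖g‖_∞ for all continuous f, g and all β ≥ 0. -/

import Mathlib

open MeasureTheory

/-- for a proper equivalence relation `R` with covering quotient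
map, `E(f)(x) = ∑_{y ~ x} p y f y` and `E^β(f) = h^β E(h^{-β} f)`, if `μ` is a
probability measure supported in the set of conditional minimum points of `h`,
then `|∫ f · E^β g dμ| ≤ ‖f‖ ‖g‖` for all continuous `f, g` and all `β ≥ 0`. -/
theorem stmt14 {X : Type*} [TopologicalSpace X] [CompactSpace X] [T2Space X]
    [MeasurableSpace X] [BorelSpace X]
    (s : Setoid X)
    (hcover : IsCoveringMap (Quotient.mk s))
    (hfin : ∀ x : X, {y : X | s.r y x}.Finite)
    (p : X → ℝ) (hpcont : Continuous p) (hppos : ∀ x, 0 < p x)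
    (hpnorm : ∀ x : X, ∑ᶠ y ∈ {y : X | s.r y x}, p y = 1)
    (h : X → ℝ) (hhcont : Continuous h) (hhpos : ∀ x, 0 < h x)
    (μ : Measure X) [IsProbabilityMeasure μ]
    (hsupp : μ {x : X | ∀ y : X, s.r x y → h x ≤ h y}ᶜ = 0)
    (f g : C(X, ℝ)) :
    ∀ β : ℝ, 0 ≤ β →
      |∫ x, f x *
          (h x ^ β * ∑ᶠ y ∈ {y : X | s.r y x}, p y * (h y ^ (-β) * g y)) ∂μ| ≤
        ‖f‖ * ‖g‖ := by
  intro β hβ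
  have hae : ∀ᵐ x ∂μ, x ∈ {x : X | ∀ y : X, s.r x y → h x ≤ h y} := by
    rw [MeasureTheory.ae_iff]
    exact hsupp
  have key : ∀ᵐ x ∂μ,
      ‖f x * (h x ^ β * ∑ᶠ y ∈ {y : X | s.r y x}, p y * (h y ^ (-β) * g y))‖
        ≤ ‖f‖ * ‖g‖ := by
    filter_upwards [hae] with x hx
    have hS := hfin x
    have hcoe : {y : X | s.r y x} = ↑hS.toFinset := (hS.coe_toFinset).symm
    rw [Real.norm_eq_abs, abs_mul]
    have hfx : |f x| ≤ ‖f‖ := by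
      rw [← Real.norm_eq_abs]; exact f.norm_coe_le_norm x
    have hbound : |h x ^ β * ∑ᶠ y ∈ {y : X | s.r y x}, p y * (h y ^ (-β) * g y)|
        ≤ ‖g‖ := by
      rw [hcoe, finsum_mem_coe_finset, Finset.mul_sum]
      calc |∑ y ∈ hS.toFinset, h x ^ β * (p y * (h y ^ (-β) * g y))|
          ≤ ∑ y ∈ hS.toFinset, |h x ^ β * (p y * (h y ^ (-β) * g y))| :=
            Finset.abs_sum_le_sum_abs _ _
        _ ≤ ∑ y ∈ hS.toFinset, p y * ‖g‖ := by
            apply Finset.sum_le_sum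
            intro y hy
            have hyx : s.r y x := by
              have := hS.mem_toFinset.mp hy
              exact this
            have hle : h x ≤ h y := hx y (Setoid.symm hyx)
            have h1 : h x ^ β * h y ^ (-β) ≤ 1 := by
              have : h x ^ β ≤ h y ^ β :=
                Real.rpow_le_rpow (hhpos x).le hle hβ
              calc h x ^ β * h y ^ (-β) ≤ h y ^ β * h y ^ (-β) := by
                    apply mul_le_mul_of_nonneg_right this
                    exact (Real.rpow_pos_of_pos (hhpos y) _).le
                _ = 1 := by
                    rw [← Real.rpow_add (hhpos y), add_neg_cancel, Real.rpow_zero]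
            rw [abs_mul, abs_mul, abs_mul]
            have habs : ∀ z : X, ∀ e : ℝ, |h z ^ e| = h z ^ e := fun z e =>
              abs_of_pos (Real.rpow_pos_of_pos (hhpos z) e)
            rw [habs, habs, abs_of_pos (hppos y)]
            have hgy : |g y| ≤ ‖g‖ := by
              rw [← Real.norm_eq_abs]; exact g.norm_coe_le_norm y
            calc h x ^ β * (p y * (h y ^ (-β) * |g y|))
                = (h x ^ β * h y ^ (-β)) * (p y * |g y|) := by ring
              _ ≤ 1 * (p y * ‖g‖) := by
                  apply mul_le_mul h1 _ _ zero_le_one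
                  · exact mul_le_mul_of_nonneg_left hgy (hppos y).le
                  · exact mul_nonneg (hppos y).le (abs_nonneg _)
              _ = p y * ‖g‖ := one_mul _
        _ = (∑ y ∈ hS.toFinset, p y) * ‖g‖ := (Finset.sum_mul _ _ _).symm
        _ = 1 * ‖g‖ := by
            congr 1
            rw [← finsum_mem_coe_finset, ← hcoe]
            exact hpnorm x
        _ = ‖g‖ := one_mul _
    exact mul_le_mul hfx hbound (abs_nonneg _) (norm_nonneg _)
  have hb := MeasureTheory.norm_integral_le_of_norm_le_const (μ := μ) key
  rw [probReal_univ, mul_one] at hb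
  rw [← Real.norm_eq_abs]
  exact hb
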